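/- Let f, g be commuting circle homeomorphisms simultaneously topologically conjugated by h to rotations R_θ and R_β respectively, with θ, β irrational. Fix denominators q of θ and q̃ of β, set θ* = ‖qθ‖, β* = ‖q̃β‖ and L = ⌊β*/θ*⌋ ≥ 1. Define M = max_x d(f^{q}(x),x), m = min_x d(f^{q}(x),x), M̃ = max_x d(g^{q̃}(x),x), m̃ = min_x d(g^{q̃}(x),x). Then M̃ ≤ (1+L)·M and m̃ ≥ L·m; hence M̃/m̃ ≤ (1 + 1/L)·(M/m). -/

import Mathlib

/-- Distance from a real number to the nearest integer. -/
noncomputable def distNearestInt (x : ℝ) : ℝ := |x - round x|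

open Set

lemma dNI_norm (x : ℝ) : ‖(x : AddCircle (1:ℝ))‖ = distNearestInt x := by
  rw [AddCircle.norm_eq]
  simp [distNearestInt]

section rep
variable [inst : Fact ((0:ℝ) < 1)]

/-- representative in [-1/2, 1/2) -/
noncomputable def repc (z : AddCircle (1:ℝ)) : ℝ :=
  ((AddCircle.equivIco 1 (-(1/2)) z : Ico (-(1/2):ℝ) (-(1/2)+1)) : ℝ)

lemma repc_coe (z : AddCircle (1:ℝ)) : ((repc z : ℝ) : AddCircle (1:ℝ)) = z :=
  (AddCircle.equivIco 1 (-(1/2))).symm_apply_apply z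

lemma repc_mem (z : AddCircle (1:ℝ)) : repc z ∈ Ico (-(1/2):ℝ) (-(1/2)+1) :=
  (AddCircle.equivIco 1 (-(1/2)) z).2

lemma repc_zero : repc (0 : AddCircle (1:ℝ)) = 0 := by
  have h1 : ((repc 0 : ℝ) : AddCircle (1:ℝ)) = ((0:ℝ) : AddCircle (1:ℝ)) := by
    rw [repc_coe]; norm_num
  have h2 : (0:ℝ) ∈ Ico (-(1/2):ℝ) (-(1/2)+1) := by constructor <;> norm_num
  exact (AddCircle.coe_eq_coe_iff_of_mem_Ico (repc_mem 0) h2).1 h1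

lemma repc_continuousAt {z : AddCircle (1:ℝ)} (hz : ‖z‖ < 1/2) : ContinuousAt repc z := by
  have hne : z ≠ ((-(1/2) : ℝ) : AddCircle (1:ℝ)) := by
    intro h
    rw [h, dNI_norm] at hz
    have h0 : round (-(1/2):ℝ) = 0 := by norm_num [round_eq]
    rw [distNearestInt, h0] at hz
    have h1 : (-(1/2:ℝ) - ((0:ℤ):ℝ)) = -(1/2) := by norm_num
    rw [h1, abs_neg, abs_of_pos (by norm_num : (0:ℝ) < 1/2)] at hz
    linarith
  exact continuous_subtype_val.continuousAt.comp (AddCircle.continuousAt_equivIco (p := 1) (a := -(1/2)) hne)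

end rep

lemma glue_closed {f : ℝ → ℝ} {s t : Set ℝ} (hs : IsClosed s) (ht : IsClosed t)
    (hfs : ContinuousOn f s) (hft : ContinuousOn f t) : ContinuousOn f (s ∪ t) := by
  intro x hx
  have Hs : ContinuousWithinAt f s x := by
    by_cases h : x ∈ s
    · exact hfs x h
    · exact continuousWithinAt_of_notMem_closure (by rwa [hs.closure_eq])
  have Ht : ContinuousWithinAt f t x := by
    by_cases h : x ∈ t
    · exact hft x h
    · exact continuousWithinAt_of_notMem_closure (by rwa [ht.closure_eq])
  exact Hs.union Ht

lemma int_coe_circle_zero (n : ℤ) : (((n : ℝ)) : AddCircle (1:ℝ)) = 0 := by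
  rw [QuotientAddGroup.eq_zero_iff]
  exact ⟨n, by simp⟩

lemma coe_eq_coe_iff_int {x y : ℝ} :
    ((x : AddCircle (1:ℝ)) = (y : AddCircle (1:ℝ))) ↔ ∃ n : ℤ, x - y = n := by
  rw [QuotientAddGroup.eq_iff_sub_mem]
  constructor
  · rintro hmem
    obtain ⟨n, hn⟩ := AddSubgroup.mem_zmultiples_iff.1 hmem
    exact ⟨n, by simpa using hn.symm⟩
  · rintro ⟨n, hn⟩
    exact AddSubgroup.mem_zmultiples_iff.2 ⟨n, by simpa using hn.symm⟩

lemma exists_lift (ψ : ℝ → AddCircle (1:ℝ)) (hc : UniformContinuous ψ)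
    (hper : ∀ x, ψ (x + 1) = ψ x) :
    ∃ (H : ℝ → ℝ) (e : ℤ), Continuous H ∧ (∀ x, ((H x : ℝ) : AddCircle (1:ℝ)) = ψ x) ∧
      (∀ x, H (x + 1) = H x + e) := by
  haveI : Fact ((0:ℝ) < 1) := ⟨one_pos⟩
  obtain ⟨δ, hδ0, hδ⟩ := Metric.uniformContinuous_iff.1 hc (1/4) (by norm_num)
  obtain ⟨N, hN0, hNδ⟩ : ∃ N : ℕ, (0:ℝ) < N ∧ 1/(N:ℝ) < δ := by
    obtain ⟨n₀, hn₀⟩ := exists_nat_one_div_lt hδ0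
    refine ⟨n₀ + 1, by positivity, ?_⟩
    have he : ((n₀:ℝ) + 1) = ((n₀ + 1 : ℕ):ℝ) := by push_cast; ring
    rwa [he] at hn₀
  set S : ℕ → ℝ := fun k => repc (ψ 0) +
    ∑ j ∈ Finset.range k, repc (ψ (((j:ℝ)+1)/N) - ψ ((j:ℝ)/N)) with hSdef
  have hSsucc : ∀ k : ℕ, S (k+1) = S k + repc (ψ (((k:ℝ)+1)/N) - ψ ((k:ℝ)/N)) := by
    intro k
    simp only [hSdef, Finset.sum_range_succ]
    ring
  set H₀ : ℝ → ℝ := fun x =>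
    S (⌊x * N⌋.toNat) + repc (ψ x - ψ ((⌊x * N⌋.toNat : ℕ) / N)) with hH₀def
  have hH₀x : ∀ x : ℝ, H₀ x = S (⌊x * N⌋.toNat)
      + repc (ψ x - ψ ((⌊x * N⌋.toNat : ℕ) / N)) := fun x => rfl
  have hS_coe : ∀ k : ℕ, ((S k : ℝ) : AddCircle (1:ℝ)) = ψ ((k:ℝ) / N) := by
    intro k
    induction k with
    | zero => simp [hSdef, repc_coe]
    | succ n ih =>
      rw [hSsucc n, QuotientAddGroup.mk_add, ih, repc_coe]
      push_cast
      abel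
  have hH₀_coe : ∀ x : ℝ, ((H₀ x : ℝ) : AddCircle (1:ℝ)) = ψ x := by
    intro x
    rw [hH₀x, QuotientAddGroup.mk_add, hS_coe, repc_coe]
    abel
  -- continuity of H₀ on [0,1]
  have piece : ∀ k : ℕ, ContinuousOn H₀ (Icc ((k:ℝ)/N) (((k:ℝ)+1)/N)) := by
    intro k
    have hcont : ContinuousOn (fun x => S k + repc (ψ x - ψ ((k:ℝ)/N)))
        (Icc ((k:ℝ)/N) (((k:ℝ)+1)/N)) := by
      intro x hx
      have hdist : dist (ψ x) (ψ ((k:ℝ)/N)) < 1/4 := by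
        apply hδ
        rw [Real.dist_eq, abs_of_nonneg (by linarith [hx.1])]
        have hstep : ((k:ℝ)+1)/N = (k:ℝ)/N + 1/N := by rw [add_div]
        have hle : x - (k:ℝ)/N ≤ 1/N := by
          have h2 := hx.2
          rw [hstep] at h2
          linarith
        linarith
      have hnorm : ‖ψ x - ψ ((k:ℝ)/N)‖ < 1/2 := by
        rw [← dist_eq_norm]; linarith
      have hrc : ContinuousAt repc (ψ x - ψ ((k:ℝ)/N)) := repc_continuousAt hnorm
      have hinner : ContinuousAt (fun y => ψ y - ψ ((k:ℝ)/N)) x :=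
        ((hc.continuous.sub continuous_const).continuousAt)
      have houter : ContinuousAt (fun y => repc (ψ y - ψ ((k:ℝ)/N))) x :=
        ContinuousAt.comp (g := repc) (f := fun y => ψ y - ψ ((k:ℝ)/N)) hrc hinner
      exact (continuousAt_const.add houter).continuousWithinAt
    apply ContinuousOn.congr hcont
    intro x hx
    rcases lt_or_eq_of_le hx.2 with hlt | heq2
    · have hfl : ⌊x * N⌋ = (k : ℤ) := by
        rw [Int.floor_eq_iff]
        constructor
        · push_cast
          exact (div_le_iff₀ hN0).1 hx.1
        · push_cast
          exact (lt_div_iff₀ hN0).1 hlt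
      rw [hH₀x, hfl, Int.toNat_natCast]
    · have hxN : x * N = ((k+1 : ℕ) : ℝ) := by
        rw [heq2]
        field_simp
        push_cast
        ring
      have hfl : ⌊x * N⌋ = ((k+1 : ℕ) : ℤ) := by rw [hxN, Int.floor_natCast]
      have hx' : ((k+1 : ℕ) : ℝ) / N = x := by
        rw [heq2]; push_cast; ring
      rw [hH₀x, hfl, Int.toNat_natCast, hx', sub_self, repc_zero, add_zero, hSsucc k, heq2]
  have hH₀cont : ContinuousOn H₀ (Icc (0:ℝ) 1) := by
    have main : ∀ k : ℕ, ContinuousOn H₀ (Icc (0:ℝ) ((k:ℝ)/N)) := by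
      intro k
      induction k with
      | zero =>
        simp only [Nat.cast_zero, zero_div, Set.Icc_self]
        exact continuousOn_singleton _ _
      | succ n ih =>
        have hcast : ((n+1:ℕ):ℝ) = (n:ℝ)+1 := by push_cast; ring
        have hunion : Icc (0:ℝ) ((n:ℝ)/N) ∪ Icc ((n:ℝ)/N) (((n:ℝ)+1)/N)
            = Icc (0:ℝ) (((n+1:ℕ):ℝ)/N) := by
          rw [hcast, Icc_union_Icc_eq_Icc (by positivity)
            ((div_le_div_iff_of_pos_right hN0).2 (by linarith))]
        rw [← hunion]
        exact glue_closed isClosed_Icc isClosed_Icc ih (piece n)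
    have := main N
    rwa [div_self hN0.ne'] at this
  -- the degree
  have hψ1 : ((H₀ 1 : ℝ) : AddCircle (1:ℝ)) = ((H₀ 0 : ℝ) : AddCircle (1:ℝ)) := by
    rw [hH₀_coe, hH₀_coe]
    have h01 := hper 0
    rwa [zero_add] at h01
  obtain ⟨e, he⟩ := coe_eq_coe_iff_int.1 hψ1
  -- the lift
  set H : ℝ → ℝ := fun x => H₀ (Int.fract x) + ⌊x⌋ * (H₀ 1 - H₀ 0) with hHdef
  have hHx : ∀ x : ℝ, H x = H₀ (Int.fract x) + ⌊x⌋ * (H₀ 1 - H₀ 0) := fun _ => rfl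
  have hper_int : ∀ (n : ℤ) (x : ℝ), ψ (x + n) = ψ x := by
    intro n
    induction n using Int.induction_on with
    | zero => intro x; norm_num
    | succ k ih =>
      intro x
      have ihx := ih x
      have e3 : (((k:ℤ)) : ℝ) = (k:ℝ) := by push_cast; ring
      rw [e3] at ihx
      have e2 : (((k:ℤ)+1 : ℤ) : ℝ) = (k:ℝ)+1 := by push_cast; ring
      rw [e2]
      have e1 : x + ((k:ℝ)+1) = (x + (k:ℝ)) + 1 := by ring
      rw [e1, hper, ihx]
    | pred k ih =>
      intro x
      have h2 := hper (x + (-(k:ℝ)-1))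
      have e1 : x + (-(k:ℝ)-1) + 1 = x + (-(k:ℝ)) := by ring
      rw [e1] at h2
      have e2 : ((-(k:ℤ)-1 : ℤ) : ℝ) = -(k:ℝ)-1 := by push_cast; ring
      have ihx := ih x
      have e3 : ((-(k:ℤ) : ℤ) : ℝ) = -(k:ℝ) := by push_cast; ring
      rw [e3] at ihx
      rw [e2, ← h2, ihx]
  refine ⟨H, e, ?_, ?_, ?_⟩
  · -- continuity
    rw [continuous_iff_continuousAt]
    intro x
    have key : ∀ n : ℤ, ContinuousOn H (Icc ((n:ℝ)) ((n:ℝ)+1)) := by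
      intro n
      have hcont : ContinuousOn (fun y => H₀ (y - n) + (n:ℝ) * (H₀ 1 - H₀ 0))
          (Icc ((n:ℝ)) ((n:ℝ)+1)) := by
        apply ContinuousOn.add ?_ continuousOn_const
        apply ContinuousOn.comp hH₀cont
        · exact (continuous_sub_right ((n:ℝ))).continuousOn
        · intro y hy
          simp only [Set.mem_Icc] at hy ⊢
          constructor <;> linarith [hy.1, hy.2]
      apply ContinuousOn.congr hcont
      intro y hy
      show H y = H₀ (y - (n:ℝ)) + (n:ℝ) * (H₀ 1 - H₀ 0)
      rcases lt_or_eq_of_le hy.2 with hlt | heq2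
      · have hfl : ⌊y⌋ = n := by
          rw [Int.floor_eq_iff]
          exact ⟨hy.1, by linarith⟩
        have hfr : Int.fract y = y - (n:ℝ) := by
          rw [← Int.self_sub_floor, hfl]
        rw [hHx, hfr, hfl]
      · have hyv : y = ((n+1 : ℤ) : ℝ) := by rw [heq2]; push_cast; ring
        rw [hHx, hyv, Int.fract_intCast, Int.floor_intCast]
        have hsub : ((n+1 : ℤ) : ℝ) - n = 1 := by push_cast; ring
        rw [hsub]
        push_cast
        ring
    have hx1 : x < (⌊x⌋ : ℝ) + 1 := Int.lt_floor_add_one x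
    have hx0 : ((⌊x⌋ : ℝ) - 1) < x := by linarith [Int.floor_le x]
    have hunion : Icc ((⌊x⌋:ℝ) - 1) ((⌊x⌋:ℝ)) ∪ Icc ((⌊x⌋:ℝ)) ((⌊x⌋:ℝ)+1)
        = Icc ((⌊x⌋:ℝ) - 1) ((⌊x⌋:ℝ)+1) := by
      rw [Icc_union_Icc_eq_Icc (by linarith) (by linarith)]
    have hco : ContinuousOn H (Icc ((⌊x⌋:ℝ) - 1) ((⌊x⌋:ℝ)+1)) := by
      rw [← hunion]
      apply glue_closed isClosed_Icc isClosed_Icc ?_ (key ⌊x⌋)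
      have := key (⌊x⌋ - 1)
      have hc1 : ((⌊x⌋ - 1 : ℤ) : ℝ) = (⌊x⌋:ℝ) - 1 := by push_cast; ring
      rw [hc1] at this
      have hc2 : ((⌊x⌋:ℝ) - 1) + 1 = (⌊x⌋:ℝ) := by ring
      rwa [hc2] at this
    exact hco.continuousAt (Icc_mem_nhds hx0 hx1)
  · -- lift property
    intro x
    rw [hHx, QuotientAddGroup.mk_add, hH₀_coe]
    have h2 : ((⌊x⌋ * (H₀ 1 - H₀ 0) : ℝ) : AddCircle (1:ℝ)) = 0 := by
      rw [he]
      have : (⌊x⌋ : ℝ) * (e:ℝ) = ((⌊x⌋ * e : ℤ) : ℝ) := by push_cast; ring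
      rw [this]
      exact int_coe_circle_zero _
    rw [h2, add_zero]
    have : Int.fract x = x + (-⌊x⌋ : ℤ) := by
      rw [Int.fract]; push_cast; ring
    rw [this, hper_int]
  · -- periodicity
    intro x
    rw [hHx, hHx]
    have h1 : Int.fract (x + 1) = Int.fract x := by
      have : x + 1 = x + ((1:ℤ):ℝ) := by push_cast; ring
      rw [this, Int.fract_add_intCast]
    have h2 : ⌊x + 1⌋ = ⌊x⌋ + 1 := by
      have : x + 1 = x + ((1:ℤ):ℝ) := by push_cast; ring
      rw [this, Int.floor_add_intCast]
    rw [h1, h2, he]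
    push_cast
    ring

lemma dNI_neg (x : ℝ) : distNearestInt (-x) = distNearestInt x := by
  rw [← dNI_norm, ← dNI_norm, AddCircle.coe_neg, norm_neg]

lemma dist_coe_circle (u v : ℝ) :
    dist ((u : ℝ) : AddCircle (1:ℝ)) ((v : ℝ) : AddCircle (1:ℝ)) = distNearestInt (u - v) := by
  rw [dist_eq_norm, ← AddCircle.coe_sub, dNI_norm]

lemma dNI_le_abs (x : ℝ) : distNearestInt x ≤ |x| := by
  rw [distNearestInt, abs_sub_round_eq_min]
  rcases le_or_gt 0 x with h | h
  · have hfr : Int.fract x ≤ x := by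
      have h0 : (0:ℝ) ≤ (⌊x⌋:ℝ) := by exact_mod_cast Int.floor_nonneg.2 h
      linarith [Int.self_sub_floor x, h0]
    exact le_trans (min_le_left _ _) (by rwa [abs_of_nonneg h])
  · refine le_trans (min_le_right _ _) ?_
    rw [abs_of_neg h]
    have h1 : ⌊x⌋ ≤ -1 := by
      have : ⌊x⌋ < 0 := Int.floor_lt.2 (by simpa using h)
      omega
    have h2 : (⌊x⌋ : ℝ) ≤ -1 := by exact_mod_cast h1
    rw [Int.fract]
    linarith

set_option maxHeartbeats 1000000 in
lemma exists_mono_lift (Φ : AddCircle (1:ℝ) ≃ₜ AddCircle (1:ℝ)) :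
    ∃ K : ℝ → ℝ, Monotone K ∧ (∀ x, K (x + 1) = K x + 1) ∧
      ∀ u v : ℝ, dist (Φ ((u : ℝ) : AddCircle (1:ℝ))) (Φ ((v : ℝ) : AddCircle (1:ℝ)))
        = distNearestInt (K u - K v) := by
  haveI : Fact ((0:ℝ) < 1) := ⟨one_pos⟩
  set ψ : ℝ → AddCircle (1:ℝ) := fun x => Φ ((x : ℝ) : AddCircle (1:ℝ)) with hψdef
  have hπlip : LipschitzWith 1 (fun x : ℝ => ((x : ℝ) : AddCircle (1:ℝ))) := by
    apply LipschitzWith.of_dist_le_mul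
    intro x y
    simpa [dist_coe_circle, Real.dist_eq, NNReal.coe_one, one_mul] using dNI_le_abs (x - y)
  have hc : UniformContinuous ψ :=
    (CompactSpace.uniformContinuous_of_continuous Φ.continuous).comp hπlip.uniformContinuous
  have hper : ∀ x : ℝ, ψ (x + 1) = ψ x := by
    intro x
    rw [hψdef]
    simp only []
    rw [AddCircle.coe_add, AddCircle.coe_period, add_zero]
  obtain ⟨H, e, hHc, hHcoe, hHper⟩ := exists_lift ψ hc hper
  -- injectivity modulo ℤ
  have hinj : ∀ x y : ℝ, ((H x : ℝ) : AddCircle (1:ℝ)) = ((H y : ℝ) : AddCircle (1:ℝ)) →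
      ∃ n : ℤ, x - y = n := by
    intro x y hxy
    rw [hHcoe, hHcoe, hψdef] at hxy
    have := Φ.injective hxy
    exact coe_eq_coe_iff_int.1 this
  have hH_int : ∀ (n : ℤ) (x : ℝ), H (x + n) = H x + n * e := by
    intro n
    induction n using Int.induction_on with
    | zero => intro x; norm_num
    | succ k ih =>
      intro x
      have e2 : (((k:ℤ)+1 : ℤ) : ℝ) = (k:ℝ)+1 := by push_cast; ring
      have e3 : (((k:ℤ):ℤ) : ℝ) = (k:ℝ) := by push_cast; ring
      rw [e2, show x + ((k:ℝ)+1) = (x + (k:ℝ)) + 1 by ring, hHper]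
      have ihx := ih x
      rw [e3] at ihx
      rw [ihx]
      push_cast
      ring
    | pred k ih =>
      intro x
      have e2 : ((-(k:ℤ)-1 : ℤ) : ℝ) = -(k:ℝ)-1 := by push_cast; ring
      have e3 : ((-(k:ℤ) : ℤ) : ℝ) = -(k:ℝ) := by push_cast; ring
      have h2 := hHper (x + (-(k:ℝ)-1))
      rw [show x + (-(k:ℝ)-1) + 1 = x + (-(k:ℝ)) by ring] at h2
      have ihx := ih x
      rw [e3] at ihx
      rw [e2]
      have : H (x + (-(k:ℝ)-1)) = H (x + (-(k:ℝ))) - e := by linarith [h2]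
      rw [this, ihx]
      push_cast
      ring
  have hH10 : H 1 = H 0 + e := by
    have := hHper 0
    rwa [zero_add] at this
  -- e ≠ 0
  have he0 : e ≠ 0 := by
    intro he
    rw [he] at hH_int hH10
    simp only [Int.cast_zero, mul_zero, add_zero] at hH_int hH10
    -- H is 1-periodic
    obtain ⟨x₀, hx₀mem, hx₀⟩ := isCompact_Icc.exists_isMaxOn (⟨0, by norm_num⟩ :
      (Set.Icc (0:ℝ) 1).Nonempty) hHc.continuousOn
    have hglob : ∀ y : ℝ, H y ≤ H x₀ := by
      intro y
      have h1 : H y = H (Int.fract y) := by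
        have := hH_int ⌊y⌋ (Int.fract y)
        rw [Int.fract_add_floor] at this
        linarith [this]
      rw [h1]
      exact hx₀ ⟨Int.fract_nonneg y, (Int.fract_lt_one y).le⟩
    have hne : ∃ y : ℝ, H y < H x₀ := by
      by_contra hcon
      push_neg at hcon
      have hconst : ∀ y : ℝ, H y = H x₀ := fun y => le_antisymm (hglob y) (hcon y)
      have h05 : ((H (1/2) : ℝ) : AddCircle (1:ℝ)) = ((H 0 : ℝ) : AddCircle (1:ℝ)) := by
        rw [hconst (1/2), hconst 0]
      obtain ⟨n, hn⟩ := hinj _ _ h05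
      rw [sub_zero] at hn
      have : (2*n : ℤ) = (1 : ℤ) := by exact_mod_cast (by linarith : (2*(n:ℝ)) = 1)
      omega
    obtain ⟨y₀, hy₀⟩ := hne
    set y := x₀ + Int.fract (y₀ - x₀) with hydef
    have hyy : y = y₀ + ((-⌊y₀ - x₀⌋ : ℤ) : ℝ) := by
      rw [hydef, ← Int.self_sub_floor]
      push_cast
      ring
    have hHy : H y = H y₀ := by rw [hyy, hH_int]
    have hfrne : Int.fract (y₀ - x₀) ≠ 0 := by
      intro h0
      rw [h0, add_zero] at hydef
      rw [hydef] at hHy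
      linarith
    have hfr0 : 0 < Int.fract (y₀ - x₀) :=
      lt_of_le_of_ne (Int.fract_nonneg _) (Ne.symm hfrne)
    have hylt : y < x₀ + 1 := by
      have := Int.fract_lt_one (y₀ - x₀)
      rw [hydef]; linarith
    have hygt : x₀ < y := by rw [hydef]; linarith
    set v := (H y₀ + H x₀)/2 with hvdef
    have hvy : H y < v := by rw [hHy, hvdef]; linarith
    have hvx : v < H x₀ := by rw [hvdef]; linarith
    obtain ⟨z₁, hz₁mem, hz₁⟩ := intermediate_value_Icc' hygt.le hHc.continuousOn
      (Set.mem_Icc.2 ⟨hvy.le, hvx.le⟩)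
    have hper0 : H (x₀ + 1) = H x₀ := by
      have := hHper x₀
      rw [he] at this
      simpa using this
    obtain ⟨z₂, hz₂mem, hz₂⟩ := intermediate_value_Icc (by linarith : y ≤ x₀ + 1)
      hHc.continuousOn (Set.mem_Icc.2 ⟨hvy.le, by rw [hper0]; exact hvx.le⟩)
    obtain ⟨n, hn⟩ := hinj z₂ z₁ (by rw [hz₁, hz₂])
    have hb1 : (0:ℝ) ≤ (n:ℝ) := by rw [← hn]; linarith [hz₁mem.2, hz₂mem.1]
    have hb2 : (n:ℝ) ≤ 1 := by rw [← hn]; linarith [hz₁mem.1, hz₂mem.2]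
    have hn0 : n = 0 ∨ n = 1 := by
      have b1 : (0:ℤ) ≤ n := by exact_mod_cast hb1
      have b2 : n ≤ (1:ℤ) := by exact_mod_cast hb2
      omega
    rcases hn0 with rfl | rfl
    · have hz12 : z₂ = z₁ := by
        have : z₂ - z₁ = 0 := by exact_mod_cast hn
        linarith
      have hz1y : z₁ = y := le_antisymm hz₁mem.2 (by rw [← hz12]; exact hz₂mem.1)
      rw [hz1y] at hz₁
      linarith
    · have hz12 : z₂ = z₁ + 1 := by
        have : z₂ - z₁ = 1 := by exact_mod_cast hn
        linarith
      have hz1x : z₁ = x₀ := le_antisymm (by linarith [hz₂mem.2, hz12]) hz₁mem.1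
      rw [hz1x] at hz₁
      linarith
  -- |e| = 1
  have he1 : e = 1 ∨ e = -1 := by
    by_contra hcon
    push_neg at hcon
    have h2 : 2 ≤ e ∨ e ≤ -2 := by omega
    have hcoe1 : ((1:ℝ) : AddCircle (1:ℝ)) = 0 := AddCircle.coe_period 1
    rcases h2 with h2 | h2
    · have h2' : (2:ℝ) ≤ (e:ℝ) := by exact_mod_cast h2
      obtain ⟨z, hzmem, hz⟩ := intermediate_value_Icc (by norm_num : (0:ℝ) ≤ 1)
        hHc.continuousOn (Set.mem_Icc.2 ⟨by linarith, by rw [hH10]; linarith⟩ :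
          H 0 + 1 ∈ Set.Icc (H 0) (H 1))
      have hcoe : ((H z : ℝ) : AddCircle (1:ℝ)) = ((H 0 : ℝ) : AddCircle (1:ℝ)) := by
        rw [hz, AddCircle.coe_add, hcoe1, add_zero]
      obtain ⟨n, hn⟩ := hinj z 0 hcoe
      rw [sub_zero] at hn
      have b1 : (0:ℤ) ≤ n := by exact_mod_cast (hn ▸ hzmem.1 : (0:ℝ) ≤ n)
      have b2 : n ≤ (1:ℤ) := by exact_mod_cast (hn ▸ hzmem.2 : (n:ℝ) ≤ 1)
      have hn0 : n = 0 ∨ n = 1 := by omega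
      rcases hn0 with rfl | rfl
      · have hz0 : z = 0 := by exact_mod_cast hn
        rw [hz0] at hz
        linarith
      · have hz1 : z = 1 := by rw [hn]; norm_num
        rw [hz1, hH10] at hz
        linarith
    · have h2' : (e:ℝ) ≤ -2 := by exact_mod_cast h2
      obtain ⟨z, hzmem, hz⟩ := intermediate_value_Icc' (by norm_num : (0:ℝ) ≤ 1)
        hHc.continuousOn (Set.mem_Icc.2 ⟨by rw [hH10]; linarith, by linarith⟩ :
          H 0 - 1 ∈ Set.Icc (H 1) (H 0))
      have hcoe : ((H z : ℝ) : AddCircle (1:ℝ)) = ((H 0 : ℝ) : AddCircle (1:ℝ)) := by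
        rw [hz, AddCircle.coe_sub, hcoe1, sub_zero]
      obtain ⟨n, hn⟩ := hinj z 0 hcoe
      rw [sub_zero] at hn
      have b1 : (0:ℤ) ≤ n := by exact_mod_cast (hn ▸ hzmem.1 : (0:ℝ) ≤ n)
      have b2 : n ≤ (1:ℤ) := by exact_mod_cast (hn ▸ hzmem.2 : (n:ℝ) ≤ 1)
      have hn0 : n = 0 ∨ n = 1 := by omega
      rcases hn0 with rfl | rfl
      · have hz0 : z = 0 := by exact_mod_cast hn
        rw [hz0] at hz
        linarith
      · have hz1 : z = 1 := by rw [hn]; norm_num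
        rw [hz1, hH10] at hz
        linarith
  -- injectivity
  have hinjective : Function.Injective H := by
    intro x y hxy
    obtain ⟨n, hn⟩ := hinj x y (by rw [hxy])
    have hxyn : x = y + n := by linarith [hn]
    have h3 := hH_int n y
    rw [hxyn, h3] at hxy
    have h4 : (n:ℝ) * (e:ℝ) = 0 := by linarith
    rcases mul_eq_zero.1 h4 with h5 | h5
    · have : n = 0 := by exact_mod_cast h5
      rw [hxyn, this]
      norm_num
    · exfalso
      exact he0 (by exact_mod_cast h5)
  have hdistH : ∀ u v : ℝ, dist (Φ ((u : ℝ) : AddCircle (1:ℝ))) (Φ ((v : ℝ) : AddCircle (1:ℝ)))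
      = distNearestInt (H u - H v) := by
    intro u v
    rw [show Φ ((u : ℝ) : AddCircle (1:ℝ)) = ψ u from rfl,
      show Φ ((v : ℝ) : AddCircle (1:ℝ)) = ψ v from rfl,
      ← hHcoe u, ← hHcoe v, dist_coe_circle]
  rcases Continuous.strictMono_of_inj hHc hinjective with hmono | hanti
  · have he' : e = 1 := by
      rcases he1 with h | h
      · exact h
      · exfalso
        have := hmono (by norm_num : (0:ℝ) < 1)
        rw [hH10, h] at this
        norm_num at this
    refine ⟨H, hmono.monotone, ?_, hdistH⟩
    intro x
    rw [hHper, he']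
    norm_num
  · have he' : e = -1 := by
      rcases he1 with h | h
      · exfalso
        have := hanti (by norm_num : (0:ℝ) < 1)
        rw [hH10, h] at this
        norm_num at this
      · exact h
    refine ⟨fun x => - H x, fun x y hxy => neg_le_neg (hanti.antitone hxy), ?_, ?_⟩
    · intro x
      simp only []
      rw [hHper, he']
      push_cast
      ring
    · intro u v
      simp only []
      rw [show -H u - -H v = -(H u - H v) by ring, dNI_neg]
      exact hdistH u v

lemma dNI_nonneg (x : ℝ) : 0 ≤ distNearestInt x := abs_nonneg _

lemma dNI_eq_min {y : ℝ} (h0 : 0 ≤ y) (h1 : y ≤ 1) :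
    distNearestInt y = min y (1 - y) := by
  rw [distNearestInt, abs_sub_round_eq_min]
  rcases eq_or_lt_of_le h1 with rfl | h1
  · norm_num
  · rw [Int.fract_eq_self.2 ⟨h0, h1⟩]

lemma dNI_le_self {y : ℝ} (h0 : 0 ≤ y) (h1 : y ≤ 1) : distNearestInt y ≤ y := by
  rw [dNI_eq_min h0 h1]; exact min_le_left _ _

lemma dNI_le_one_sub {y : ℝ} (h0 : 0 ≤ y) (h1 : y ≤ 1) : distNearestInt y ≤ 1 - y := by
  rw [dNI_eq_min h0 h1]; exact min_le_right _ _

lemma le_dNI_of_le_half {y : ℝ} (h0 : 0 ≤ y) (h1 : y ≤ 1/2) : y ≤ distNearestInt y := by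
  rw [dNI_eq_min h0 (by linarith)]
  rw [min_def]; split <;> linarith

lemma one_sub_le_dNI_of_half_le {y : ℝ} (h0 : 1/2 ≤ y) (h1 : y ≤ 1) :
    1 - y ≤ distNearestInt y := by
  rw [dNI_eq_min (by linarith) h1]
  rw [min_def]; split <;> linarith

lemma min_le_dNI {y : ℝ} (h0 : 0 ≤ y) (h1 : y ≤ 1) : min y (1 - y) ≤ distNearestInt y := by
  rw [dNI_eq_min h0 h1]

/-- The core covering estimate on the real line. -/
lemma core_est (H : ℝ → ℝ) (mono : Monotone H) (per : ∀ x, H (x + 1) = H x + 1)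
    (a b : ℝ) (ha : 0 < a) (hb2 : b ≤ 1/2) (L : ℕ) (hL1 : 1 ≤ L)
    (hLa : (L : ℝ) * a ≤ b) (hLb : b < ((L : ℝ) + 1) * a)
    (M m : ℝ) (hM : ∀ x, distNearestInt (H (x + a) - H x) ≤ M)
    (hm : ∀ x, m ≤ distNearestInt (H (x + a) - H x)) (u : ℝ) :
    distNearestInt (H (u + b) - H u) ≤ ((L : ℝ) + 1) * M ∧
      (L : ℝ) * m ≤ distNearestInt (H (u + b) - H u) := by
  have hL1' : (1:ℝ) ≤ L := by exact_mod_cast hL1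
  have hb0 : 0 < b := lt_of_lt_of_le (by positivity) hLa
  have hab : a ≤ b := le_trans (by nlinarith [hL1']) hLa
  have hM0 : 0 ≤ M := le_trans (dNI_nonneg _) (hM 0)
  -- basic facts about increments
  have incr : ∀ x c : ℝ, 0 ≤ c → c ≤ 1 → 0 ≤ H (x + c) - H x ∧ H (x + c) - H x ≤ 1 := by
    intro x c hc0 hc1
    constructor
    · have := mono (by linarith : x ≤ x + c); linarith
    · have := mono (by linarith : x + c ≤ x + 1); rw [per x] at this; linarith
  -- telescoping sums of steps of size `a` starting at `v`
  have tele : ∀ (v : ℝ) (k : ℕ), H (v + k * a) - H v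
      = ∑ j ∈ Finset.range k, (H (v + (j+1) * a) - H (v + j * a)) := by
    intro v k
    induction k with
    | zero => simp
    | succ n ih =>
      rw [Finset.sum_range_succ, ← ih]
      push_cast
      ring_nf
  -- each step of size `a` is between `m` and ... bounded below by m
  have step_lb : ∀ x : ℝ, m ≤ H (x + a) - H x := by
    intro x
    obtain ⟨h0, h1⟩ := incr x a ha.le (by linarith)
    exact le_trans (hm x) (dNI_le_self h0 h1)
  have hyb : 0 ≤ H (u + b) - H u ∧ H (u + b) - H u ≤ 1 := incr u b hb0.le (by linarith)
  set y := H (u + b) - H u with hy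
  -- Lower bound
  have lower : (L : ℝ) * m ≤ distNearestInt y := by
    have hLm_sum : ∀ v : ℝ, (L:ℝ) * m ≤ H (v + L * a) - H v := by
      intro v
      rw [tele v L]
      calc (L:ℝ) * m = ∑ _j ∈ Finset.range L, m := by
            rw [Finset.sum_const, Finset.card_range, nsmul_eq_mul]
          _ ≤ _ := by
            apply Finset.sum_le_sum
            intro j _
            have := step_lb (v + j * a)
            have e : v + j * a + a = v + (j+1) * a := by ring
            rw [e] at this; exact this
    refine le_trans (le_min ?_ ?_) (min_le_dNI hyb.1 hyb.2)
    · calc (L:ℝ) * m ≤ H (u + L*a) - H u := hLm_sum u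
        _ ≤ y := by have := mono (by nlinarith : u + L*a ≤ u + b); rw [hy]; linarith
    · calc (L:ℝ) * m ≤ H (u + b + L*a) - H (u + b) := hLm_sum (u + b)
        _ ≤ 1 - y := by
            have h1 : u + b + L*a ≤ u + 1 := by nlinarith
            have := mono h1
            rw [per u] at this
            rw [hy]; linarith
  refine ⟨?_, lower⟩
  -- Upper bound
  by_cases hDa : H (u + a) - H u > 1/2
  · -- case A
    obtain ⟨ha0, ha1⟩ := incr u a ha.le (by linarith)
    calc distNearestInt y ≤ 1 - y := dNI_le_one_sub hyb.1 hyb.2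
      _ ≤ 1 - (H (u + a) - H u) := by
          have := mono (by linarith : u + a ≤ u + b); rw [hy]; linarith
      _ ≤ distNearestInt (H (u + a) - H u) := one_sub_le_dNI_of_half_le (by linarith) ha1
      _ ≤ M := hM u
      _ ≤ ((L:ℝ)+1) * M := by nlinarith [hL1']
  · push_neg at hDa
    set r := b - L * a with hr
    have hr0 : 0 ≤ r := by rw [hr]; linarith
    have hra : r < a := by rw [hr]; nlinarith
    -- ρ ≤ M
    have hρ : H (u + r) - H u ≤ M := by
      have h1 : H (u + r) - H u ≤ H (u + a) - H u := by
        have := mono (by linarith : u + r ≤ u + a); linarith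
      obtain ⟨q0, q1⟩ := incr u a ha.le (by linarith)
      calc H (u + r) - H u ≤ H (u + a) - H u := h1
        _ ≤ distNearestInt (H (u + a) - H u) := le_dNI_of_le_half q0 hDa
        _ ≤ M := hM u
    have decomp : y = (H (u + r) - H u)
        + ∑ j ∈ Finset.range L, (H (u + r + (j+1) * a) - H (u + r + j * a)) := by
      rw [← tele (u + r) L, hy]
      have e : u + r + L * a = u + b := by rw [hr]; ring
      rw [e]; ring
    by_cases hBig : ∃ j ∈ Finset.range L, H (u + r + (j+1) * a) - H (u + r + j * a) > 1/2
    · obtain ⟨j, hj, hjs⟩ := hBig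
      set s := H (u + r + (j+1) * a) - H (u + r + j * a) with hs
      have hs1 : s ≤ 1 := by
        have e : u + r + j * a + a = u + r + (j+1)*a := by ring
        have := (incr (u + r + j * a) a ha.le (by linarith)).2
        rw [e] at this; rw [hs]; linarith
      have hsM : 1 - s ≤ M := by
        have e : u + r + j * a + a = u + r + (j+1)*a := by ring
        have := hM (u + r + j * a)
        rw [e] at this
        exact le_trans (one_sub_le_dNI_of_half_le (by linarith) hs1) this
      have hsy : s ≤ y := by
        rw [decomp]
        have hρ0 : 0 ≤ H (u + r) - H u := (incr u r hr0 (by linarith)).1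
        have : s ≤ ∑ j ∈ Finset.range L, (H (u + r + ((j:ℝ)+1) * a) - H (u + r + (j:ℝ) * a)) := by
          rw [hs]
          refine Finset.single_le_sum (f := fun j : ℕ => H (u + r + ((j:ℝ)+1) * a) - H (u + r + (j:ℝ) * a)) (fun i _ => ?_) hj
          have e : u + r + (i:ℝ) * a + a = u + r + ((i:ℝ)+1)*a := by ring
          have := (incr (u + r + (i:ℝ) * a) a ha.le (by linarith)).1
          rw [e] at this; simpa using this
        linarith
      calc distNearestInt y ≤ 1 - y := dNI_le_one_sub hyb.1 hyb.2
        _ ≤ 1 - s := by linarith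
        _ ≤ M := hsM
        _ ≤ ((L:ℝ)+1) * M := by nlinarith [hL1']
    · push_neg at hBig
      have sum_le : ∑ j ∈ Finset.range L, (H (u + r + (j+1) * a) - H (u + r + j * a))
          ≤ (L:ℝ) * M := by
        calc ∑ j ∈ Finset.range L, (H (u + r + (j+1) * a) - H (u + r + j * a))
            ≤ ∑ _j ∈ Finset.range L, M := by
              apply Finset.sum_le_sum
              intro j hj
              have e : u + r + j * a + a = u + r + (j+1)*a := by ring
              have h0 := (incr (u + r + j * a) a ha.le (by linarith)).1
              rw [e] at h0
              have := hM (u + r + j * a)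
              rw [e] at this
              exact le_trans (le_dNI_of_le_half h0 (hBig j hj)) this
          _ = (L:ℝ) * M := by rw [Finset.sum_const, Finset.card_range, nsmul_eq_mul]
      calc distNearestInt y ≤ y := dNI_le_self hyb.1 hyb.2
        _ ≤ M + (L:ℝ) * M := by rw [decomp]; exact add_le_add hρ sum_le
        _ = ((L:ℝ)+1) * M := by ring


lemma dNI_add_int (y : ℝ) (n : ℤ) : distNearestInt (y + n) = distNearestInt y := by
  rw [← dNI_norm, ← dNI_norm, AddCircle.coe_add, int_coe_circle_zero, add_zero]

lemma circle_dist_le_half (w w' : AddCircle (1:ℝ)) : dist w w' ≤ 1/2 := by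
  induction w using QuotientAddGroup.induction_on with
  | H u =>
    induction w' using QuotientAddGroup.induction_on with
    | H v =>
      rw [dist_coe_circle, distNearestInt]
      exact abs_sub_round _

lemma circle_coe_surj (z : AddCircle (1:ℝ)) : ∃ v : ℝ, ((v : ℝ) : AddCircle (1:ℝ)) = z := by
  induction z using QuotientAddGroup.induction_on with
  | H v => exact ⟨v, rfl⟩

/-- Lemma 8 of the paper: if commuting circle homeomorphisms `f`, `g` are simultaneously
conjugated by `h` to the rotations `R_θ`, `R_β`, with `θ* = ‖qθ‖`, `β* = ‖q̃β‖` and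
`L = ⌊β*/θ*⌋ ≥ 1`, then the extremal displacements satisfy
`M̃ ≤ (1+L)·M`, `m̃ ≥ L·m`, and `M̃/m̃ ≤ (1 + 1/L)·(M/m)`. -/
theorem displacement_transfer
    (θ β : ℝ) (hθ : Irrational θ) (hβ : Irrational β)
    (f g h : AddCircle (1 : ℝ) ≃ₜ AddCircle (1 : ℝ))
    (hcomm : ∀ x, f (g x) = g (f x))
    (hconjf : ∀ x, h (f (h.symm x)) = x + (θ : AddCircle (1 : ℝ)))
    (hconjg : ∀ x, h (g (h.symm x)) = x + (β : AddCircle (1 : ℝ)))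
    (q qt : ℕ) (θs βs : ℝ)
    (hθs : θs = distNearestInt ((q : ℝ) * θ))
    (hβs : βs = distNearestInt ((qt : ℝ) * β))
    (L : ℕ) (hL : L = ⌊βs / θs⌋₊) (hL1 : 1 ≤ L)
    (M m Mt mt : ℝ)
    (hM : M = ⨆ x : AddCircle (1 : ℝ), dist ((⇑f)^[q] x) x)
    (hm : m = ⨅ x : AddCircle (1 : ℝ), dist ((⇑f)^[q] x) x)
    (hMt : Mt = ⨆ x : AddCircle (1 : ℝ), dist ((⇑g)^[qt] x) x)
    (hmt : mt = ⨅ x : AddCircle (1 : ℝ), dist ((⇑g)^[qt] x) x) :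
    Mt ≤ (1 + L) * M ∧ (L : ℝ) * m ≤ mt ∧ Mt / mt ≤ (1 + 1 / L) * (M / m) := by
  haveI : Fact ((0:ℝ) < 1) := ⟨one_pos⟩
  -- q and qt are nonzero
  have hq0 : q ≠ 0 := by
    intro h0
    rw [h0] at hθs
    have : θs = 0 := by simp [hθs, distNearestInt]
    rw [this, div_zero, Nat.floor_zero] at hL
    omega
  have hqt0 : qt ≠ 0 := by
    intro h0
    rw [h0] at hβs
    have : βs = 0 := by simp [hβs, distNearestInt]
    rw [this] at hL
    have hfb : βs / θs = 0 / θs := by rw [this]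
    rw [zero_div, Nat.floor_zero] at hL
    omega
  have hqirr : Irrational ((q:ℝ) * θ) := hθ.natCast_mul hq0
  have hqtirr : Irrational ((qt:ℝ) * β) := hβ.natCast_mul hqt0
  have ha0 : 0 < θs := by
    rw [hθs, distNearestInt]
    exact abs_pos.2 (sub_ne_zero.2 (hqirr.ne_int _))
  have hb0 : 0 < βs := by
    rw [hβs, distNearestInt]
    exact abs_pos.2 (sub_ne_zero.2 (hqtirr.ne_int _))
  have ha2 : θs ≤ 1/2 := by rw [hθs, distNearestInt]; exact abs_sub_round _
  have hb2 : βs ≤ 1/2 := by rw [hβs, distNearestInt]; exact abs_sub_round _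
  have hLa : (L:ℝ) * θs ≤ βs := by
    have h1 : (L:ℝ) ≤ βs / θs := by
      rw [hL]
      exact Nat.floor_le (by positivity)
    rwa [le_div_iff₀ ha0] at h1
  have hLb : βs < ((L:ℝ) + 1) * θs := by
    have h1 : βs / θs < (L:ℝ) + 1 := by
      rw [hL]
      exact_mod_cast Nat.lt_floor_add_one (βs / θs)
    rwa [div_lt_iff₀ ha0] at h1
  -- monotone lift of h.symm
  obtain ⟨K, hKmono, hKper, hKdist⟩ := exists_mono_lift h.symm
  have hK_int : ∀ (n : ℤ) (x : ℝ), K (x + n) = K x + n := by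
    intro n
    induction n using Int.induction_on with
    | zero => intro x; norm_num
    | succ k ih =>
      intro x
      have e2 : (((k:ℤ)+1 : ℤ) : ℝ) = (k:ℝ)+1 := by push_cast; ring
      have e3 : (((k:ℤ):ℤ) : ℝ) = (k:ℝ) := by push_cast; ring
      have ihx := ih x
      rw [e3] at ihx
      rw [e2, show x + ((k:ℝ)+1) = (x + (k:ℝ)) + 1 by ring, hKper, ihx]
      ring
    | pred k ih =>
      intro x
      have e2 : ((-(k:ℤ)-1 : ℤ) : ℝ) = -(k:ℝ)-1 := by push_cast; ring
      have e3 : ((-(k:ℤ) : ℤ) : ℝ) = -(k:ℝ) := by push_cast; ring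
      have ihx := ih x
      rw [e3] at ihx
      have h2 := hKper (x + (-(k:ℝ)-1))
      rw [show x + (-(k:ℝ)-1) + 1 = x + (-(k:ℝ)) by ring, ihx] at h2
      rw [e2, show K (x + (-(k:ℝ)-1)) = K x + -(k:ℝ) - 1 by linarith [h2]]
      ring
  -- iterate formulas
  have hconjf' : ∀ x, f (h.symm x) = h.symm (x + ((θ : ℝ) : AddCircle (1:ℝ))) := by
    intro x
    have h1 := congrArg h.symm (hconjf x)
    rwa [Homeomorph.symm_apply_apply] at h1
  have hconjg' : ∀ x, g (h.symm x) = h.symm (x + ((β : ℝ) : AddCircle (1:ℝ))) := by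
    intro x
    have h1 := congrArg h.symm (hconjg x)
    rwa [Homeomorph.symm_apply_apply] at h1
  have hfit : ∀ (n : ℕ) (z : AddCircle (1:ℝ)),
      (⇑f)^[n] (h.symm z) = h.symm (z + (((n:ℝ) * θ : ℝ) : AddCircle (1:ℝ))) := by
    intro n
    induction n with
    | zero =>
      intro z
      simp
    | succ k ih =>
      intro z
      rw [Function.iterate_succ_apply', ih, hconjf']
      congr 1
      rw [add_assoc, ← AddCircle.coe_add]
      congr 1
      push_cast
      ring
  have hgit : ∀ (n : ℕ) (z : AddCircle (1:ℝ)),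
      (⇑g)^[n] (h.symm z) = h.symm (z + (((n:ℝ) * β : ℝ) : AddCircle (1:ℝ))) := by
    intro n
    induction n with
    | zero =>
      intro z
      simp
    | succ k ih =>
      intro z
      rw [Function.iterate_succ_apply', ih, hconjg']
      congr 1
      rw [add_assoc, ← AddCircle.coe_add]
      congr 1
      push_cast
      ring
  -- displacement value formulas
  have hdistf : ∀ u : ℝ, dist ((⇑f)^[q] (h.symm ((u:ℝ) : AddCircle (1:ℝ))))
      (h.symm ((u:ℝ) : AddCircle (1:ℝ))) = distNearestInt (K (u + (q:ℝ)*θ) - K u) := by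
    intro u
    rw [hfit q, ← AddCircle.coe_add, hKdist]
  have hdistg : ∀ u : ℝ, dist ((⇑g)^[qt] (h.symm ((u:ℝ) : AddCircle (1:ℝ))))
      (h.symm ((u:ℝ) : AddCircle (1:ℝ))) = distNearestInt (K (u + (qt:ℝ)*β) - K u) := by
    intro u
    rw [hgit qt, ← AddCircle.coe_add, hKdist]
  -- boundedness
  have hbddf : BddAbove (Set.range fun x : AddCircle (1:ℝ) => dist ((⇑f)^[q] x) x) := by
    refine ⟨1/2, ?_⟩
    rintro _ ⟨w, rfl⟩
    exact circle_dist_le_half _ _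
  have hbddg : BddAbove (Set.range fun x : AddCircle (1:ℝ) => dist ((⇑g)^[qt] x) x) := by
    refine ⟨1/2, ?_⟩
    rintro _ ⟨w, rfl⟩
    exact circle_dist_le_half _ _
  have hbelf : BddBelow (Set.range fun x : AddCircle (1:ℝ) => dist ((⇑f)^[q] x) x) := by
    refine ⟨0, ?_⟩
    rintro _ ⟨w, rfl⟩
    exact dist_nonneg
  -- step bounds for the basic rotation step
  have hMstep : ∀ x : ℝ, distNearestInt (K (x + (q:ℝ)*θ) - K x) ≤ M := by
    intro x
    rw [hM, ← hdistf x]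
    exact le_ciSup hbddf _
  have hmstep : ∀ x : ℝ, m ≤ distNearestInt (K (x + (q:ℝ)*θ) - K x) := by
    intro x
    rw [hm, ← hdistf x]
    exact ciInf_le hbelf _
  -- convert to steps of size θs
  have keyf : ∀ x : ℝ, ∃ u : ℝ,
      distNearestInt (K (x + θs) - K x) = distNearestInt (K (u + (q:ℝ)*θ) - K u) := by
    intro x
    have hcr : (q:ℝ)*θ = ((q:ℝ)*θ - round ((q:ℝ)*θ)) + (round ((q:ℝ)*θ) : ℤ) := by ring
    rcases abs_cases ((q:ℝ)*θ - round ((q:ℝ)*θ)) with ⟨h1, _⟩ | ⟨h1, _⟩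
    · -- positive representative : θs = qθ - round(qθ)
      refine ⟨x, ?_⟩
      have hθc : θs = (q:ℝ)*θ - round ((q:ℝ)*θ) := by rw [hθs, distNearestInt, h1]
      have : K (x + (q:ℝ)*θ) = K (x + θs) + (round ((q:ℝ)*θ) : ℤ) := by
        rw [show x + (q:ℝ)*θ = (x + θs) + ((round ((q:ℝ)*θ) : ℤ) : ℝ) by
          rw [hθc]; push_cast; ring, hK_int]
      rw [this, show K (x + θs) + ((round ((q:ℝ)*θ) : ℤ) : ℝ) - K x
        = (K (x + θs) - K x) + ((round ((q:ℝ)*θ) : ℤ) : ℝ) by ring, dNI_add_int]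
    · -- negative representative : θs = -(qθ - round(qθ))
      refine ⟨x + θs, ?_⟩
      have hθc : θs = -((q:ℝ)*θ - round ((q:ℝ)*θ)) := by rw [hθs, distNearestInt, h1]
      have : K (x + θs + (q:ℝ)*θ) = K x + (round ((q:ℝ)*θ) : ℤ) := by
        rw [show x + θs + (q:ℝ)*θ = x + ((round ((q:ℝ)*θ) : ℤ) : ℝ) by
          rw [hθc]; push_cast; ring, hK_int]
      rw [this, show K x + ((round ((q:ℝ)*θ) : ℤ) : ℝ) - K (x + θs)
        = (-(K (x + θs) - K x)) + ((round ((q:ℝ)*θ) : ℤ) : ℝ) by ring, dNI_add_int, dNI_neg]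
  have keyg : ∀ v : ℝ, ∃ u : ℝ,
      distNearestInt (K (v + (qt:ℝ)*β) - K v) = distNearestInt (K (u + βs) - K u) := by
    intro v
    rcases abs_cases ((qt:ℝ)*β - round ((qt:ℝ)*β)) with ⟨h1, _⟩ | ⟨h1, _⟩
    · refine ⟨v, ?_⟩
      have hβc : βs = (qt:ℝ)*β - round ((qt:ℝ)*β) := by rw [hβs, distNearestInt, h1]
      have : K (v + (qt:ℝ)*β) = K (v + βs) + (round ((qt:ℝ)*β) : ℤ) := by
        rw [show v + (qt:ℝ)*β = (v + βs) + ((round ((qt:ℝ)*β) : ℤ) : ℝ) by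
          rw [hβc]; push_cast; ring, hK_int]
      rw [this, show K (v + βs) + ((round ((qt:ℝ)*β) : ℤ) : ℝ) - K v
        = (K (v + βs) - K v) + ((round ((qt:ℝ)*β) : ℤ) : ℝ) by ring, dNI_add_int]
    · refine ⟨v - βs, ?_⟩
      have hβc : βs = -((qt:ℝ)*β - round ((qt:ℝ)*β)) := by rw [hβs, distNearestInt, h1]
      have : K (v + (qt:ℝ)*β) = K (v - βs) + (round ((qt:ℝ)*β) : ℤ) := by
        rw [show v + (qt:ℝ)*β = (v - βs) + ((round ((qt:ℝ)*β) : ℤ) : ℝ) by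
          rw [hβc]; push_cast; ring, hK_int]
      rw [show (v - βs) + βs = v by ring, this, show K (v - βs) + ((round ((qt:ℝ)*β) : ℤ) : ℝ) - K v
        = (-(K v - K (v - βs))) + ((round ((qt:ℝ)*β) : ℤ) : ℝ) by ring, dNI_add_int, dNI_neg]
  have hMa : ∀ x : ℝ, distNearestInt (K (x + θs) - K x) ≤ M := by
    intro x
    obtain ⟨u, hu⟩ := keyf x
    rw [hu]
    exact hMstep u
  have hma : ∀ x : ℝ, m ≤ distNearestInt (K (x + θs) - K x) := by
    intro x
    obtain ⟨u, hu⟩ := keyf x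
    rw [hu]
    exact hmstep u
  -- the covering bound, for every circle point
  have hcover : ∀ w : AddCircle (1:ℝ),
      dist ((⇑g)^[qt] w) w ≤ ((L:ℝ) + 1) * M ∧ (L:ℝ) * m ≤ dist ((⇑g)^[qt] w) w := by
    intro w
    obtain ⟨v, hv⟩ := circle_coe_surj (h w)
    have hw : h.symm ((v:ℝ) : AddCircle (1:ℝ)) = w := by rw [hv, Homeomorph.symm_apply_apply]
    obtain ⟨u, hu⟩ := keyg v
    have hval : dist ((⇑g)^[qt] w) w = distNearestInt (K (u + βs) - K u) := by
      rw [← hw, hdistg v, hu]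
    rw [hval]
    exact core_est K hKmono hKper θs βs ha0 hb2 L hL1 hLa hLb M m hMa hma u
  -- first two goals
  have goal1 : Mt ≤ (1 + (L:ℝ)) * M := by
    rw [hMt]
    apply ciSup_le
    intro w
    rw [show (1 + (L:ℝ)) * M = ((L:ℝ) + 1) * M by ring]
    exact (hcover w).1
  have goal2 : (L:ℝ) * m ≤ mt := by
    rw [hmt]
    apply le_ciInf
    intro w
    exact (hcover w).2
  refine ⟨goal1, goal2, ?_⟩
  -- positivity of m
  have hmpos : 0 < m := by
    have hFc : Continuous fun w : AddCircle (1:ℝ) => dist ((⇑f)^[q] w) w :=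
      (f.continuous.iterate q).dist continuous_id
    obtain ⟨w₀, -, hw₀⟩ := isCompact_univ.exists_isMinOn
      (Set.univ_nonempty : (Set.univ : Set (AddCircle (1:ℝ))).Nonempty) hFc.continuousOn
    have hle : dist ((⇑f)^[q] w₀) w₀ ≤ m := by
      rw [hm]
      exact le_ciInf fun w => hw₀ (Set.mem_univ w)
    have hne : (⇑f)^[q] w₀ ≠ w₀ := by
      intro heq
      have h2 := hfit q (h w₀)
      rw [h.symm_apply_apply, heq] at h2
      have h3 : h w₀ + (((q:ℝ) * θ : ℝ) : AddCircle (1:ℝ)) = h w₀ := by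
        have h4 := congrArg h h2
        rw [Homeomorph.apply_symm_apply] at h4
        exact h4.symm
      have h5 : (((q:ℝ) * θ : ℝ) : AddCircle (1:ℝ)) = (((0:ℝ)) : AddCircle (1:ℝ)) := by
        have h6 : (((q:ℝ) * θ : ℝ) : AddCircle (1:ℝ)) = 0 := by
          have := h3
          rwa [add_eq_left] at this
        rw [h6]
        norm_num
      obtain ⟨n, hn⟩ := coe_eq_coe_iff_int.1 h5
      rw [sub_zero] at hn
      exact hqirr.ne_int n hn
    exact lt_of_lt_of_le (dist_pos.2 hne) hle
  -- final arithmetic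
  have hMpos : 0 ≤ M := le_trans (dNI_nonneg _) (hMa 0)
  have hMtpos : 0 ≤ Mt := by
    rw [hMt]
    exact le_trans dist_nonneg (le_ciSup hbddg (0 : AddCircle (1:ℝ)))
  have hL0 : (0:ℝ) < (L:ℝ) := by
    have : (1:ℝ) ≤ (L:ℝ) := by exact_mod_cast hL1
    linarith
  have hLm : 0 < (L:ℝ) * m := mul_pos hL0 hmpos
  have hmt0 : 0 < mt := lt_of_lt_of_le hLm goal2
  calc Mt / mt ≤ ((1 + (L:ℝ)) * M) / ((L:ℝ) * m) :=
        div_le_div₀ (mul_nonneg (by linarith) hMpos) goal1 hLm goal2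
    _ = (1 + 1/(L:ℝ)) * (M/m) := by
        have hLne : (L:ℝ) ≠ 0 := hL0.ne'
        have hmne : m ≠ 0 := hmpos.ne'
        field_simp
        ring_nf
        try exact Or.inl trivial
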